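/- Ω_0^{(n)} = C_n, the n-th Catalan number, for all n ≥ 1. -/

import Mathlib

open Finset

/-- `l` encodes a (non-degenerate) indexing matrix on `n` points: the columns,
listed left to right, as pairs `(top entry, bottom entry)`.  Entries lie in
`[0, n-1]`, the first row is strictly increasing, the second row is weakly
increasing, repeated second-row entries are `0`, and each top entry is at
least the corresponding bottom entry. -/
def IsIndexingMatrix (n : ℕ) (l : List (ℕ × ℕ)) : Prop :=
  1 ≤ l.length ∧ l.length ≤ n ∧
  (∀ p ∈ l, p.1 < n ∧ p.2 ≤ p.1) ∧
  l.Pairwise (fun p q => p.1 < q.1 ∧ p.2 ≤ q.2 ∧ (p.2 = q.2 → p.2 = 0))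

/-- A positive indexing matrix: all entries are positive. -/
def IsPositiveIndexingMatrix (n : ℕ) (l : List (ℕ × ℕ)) : Prop :=
  IsIndexingMatrix n l ∧ ∀ p ∈ l, 0 < p.1 ∧ 0 < p.2

/-- `θ_k^{(n)}`: the number of positive indexing matrices whose `(1,1)` entry
equals `k`. -/
noncomputable def theta (n k : ℕ) : ℕ :=
  Nat.card {l : List (ℕ × ℕ) //
    IsPositiveIndexingMatrix n l ∧ l.head?.map Prod.fst = some k}

/-- The blob-rank of an indexing matrix: the number of its columns containing
a `0`. -/
def blobRank (l : List (ℕ × ℕ)) : ℕ := l.countP (fun p => p.1 == 0 || p.2 == 0)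

/-- `Ω_r^{(n)}`: the number of indexing matrices on `n` points of blob-rank `r`,
the degenerate indexing matrix being counted in `Ω_0^{(n)}`. -/
noncomputable def Omega (n r : ℕ) : ℕ :=
  Nat.card {l : List (ℕ × ℕ) // IsIndexingMatrix n l ∧ blobRank l = r} +
    (if r = 0 then 1 else 0)

/-- `χ_k^{(n)} = Σ_{i₁+⋯+i_k = n-k} C_{i₁} ⋯ C_{i_k}` (Catalan numbers). -/
def chi (n k : ℕ) : ℕ :=
  ∑ t ∈ Finset.Nat.antidiagonalTuple k (n - k), ∏ j, catalan (t j)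

/-- A Temperley–Lieb diagram on `n` points: a non-crossing perfect matching of
`2n` boundary points numbered clockwise, given by a fixed-point free
involution. -/
structure TLDiagram (n : ℕ) where
  f : Fin (2 * n) → Fin (2 * n)
  involutive : ∀ x, f (f x) = x
  noFixedPoint : ∀ x, f x ≠ x
  noncrossing : ∀ a b : Fin (2 * n), a < b → b < f a → f a < f b → False

/-- `a` is the left (smaller) endpoint of an arc of `D`. -/
def TLDiagram.IsArc {n : ℕ} (D : TLDiagram n) (a : Fin (2 * n)) : Prop :=
  a < D.f a

/-- The arc with left endpoint `a` is exposed to the left side of the diagram,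
i.e. it is not nested inside any other arc. -/
def TLDiagram.IsExposed {n : ℕ} (D : TLDiagram n) (a : Fin (2 * n)) : Prop :=
  a < D.f a ∧ ∀ c, ¬ (c < a ∧ D.f a < D.f c)

/-- The number of arcs of `D` exposed to the left side. -/
noncomputable def exposedCount {n : ℕ} (D : TLDiagram n) : ℕ :=
  Nat.card {a : Fin (2 * n) // D.IsExposed a}

/-- A `d`-abacus blob diagram on `n` points: a TL-diagram together with blobs
on some arcs exposed to the left, one bead count in `ℤ/dℤ` on every arc, and
an extra bead count on every blobbed arc (its second component). -/
structure AbacusBlobDiagram (d n : ℕ) where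
  base : TLDiagram n
  blob : Fin (2 * n) → Bool
  blob_exposed : ∀ a, blob a = true → base.IsExposed a
  beads₁ : Fin (2 * n) → ZMod d
  beads₂ : Fin (2 * n) → ZMod d
  beads₁_arc : ∀ a, ¬ base.IsArc a → beads₁ a = 0
  beads₂_blob : ∀ a, blob a = false → beads₂ a = 0

/-- A `d`-abacus hook diagram on `n` points: a blobbed TL-diagram in which all
blobbed arcs are merged into the single hook component through `0, 0'`, with a
bead count in `ℤ/dℤ` on every unblobbed arc and one on the hook component. -/
structure AbacusHookDiagram (d n : ℕ) where
  base : TLDiagram n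
  blob : Fin (2 * n) → Bool
  blob_exposed : ∀ a, blob a = true → base.IsExposed a
  beads : Fin (2 * n) → ZMod d
  beads_arc : ∀ a, ¬ base.IsArc a ∨ blob a = true → beads a = 0
  hookBeads : ZMod d


namespace Stmt6Aux
open List DyckStep

/-- Valley-corner list validity relative to a current position. -/
def Good (n : ℕ) : ℕ → ℕ → List (ℕ × ℕ) → Prop
  | _, _, [] => True
  | x, y, (a, b) :: r => x ≤ a ∧ y < b ∧ b ≤ a ∧ a < n ∧ Good n (a + 1) b r

/-- Encode a corner list as a Dyck path (list of steps). -/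
def enc (n : ℕ) : ℕ → ℕ → List (ℕ × ℕ) → List DyckStep
  | x, y, [] => replicate (n - x) U ++ replicate (n - y) D
  | x, y, (a, b) :: r => replicate (a - x) U ++ (replicate (b - y) D ++ enc n a b r)

/-- Decode a Dyck path into its list of valley corners. -/
def dec : List DyckStep → ℕ → ℕ → List (ℕ × ℕ)
  | [], _, _ => []
  | U :: w, x, y => dec w (x + 1) y
  | D :: w, x, y => (if w.head? = some U then [(x, y + 1)] else []) ++ dec w x (y + 1)

lemma good_mono {n : ℕ} {l : List (ℕ × ℕ)} {x₁ y₁ x₂ y₂ : ℕ} (h : Good n x₁ y₁ l)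
    (hx : x₂ ≤ x₁) (hy : y₂ ≤ y₁) : Good n x₂ y₂ l := by
  cases l with
  | nil => trivial
  | cons p r =>
    obtain ⟨a, b⟩ := p
    obtain ⟨h1, h2, h3⟩ := h
    exact ⟨le_trans hx h1, lt_of_le_of_lt hy h2, h3⟩

lemma count_enc {n : ℕ} (l : List (ℕ × ℕ)) : ∀ x y, Good n x y l →
    (enc n x y l).count U = n - x ∧ (enc n x y l).count D = n - y := by
  induction l with
  | nil =>
    intro x y _
    simp [enc, count_replicate]
  | cons p r ih =>
    obtain ⟨a, b⟩ := p
    intro x y h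
    obtain ⟨h1, h2, h3, h4, h5⟩ := h
    obtain ⟨ihU, ihD⟩ := ih a b (good_mono h5 (Nat.le_succ a) le_rfl)
    simp only [enc, count_append, count_replicate, ihU, ihD]
    constructor <;> simp <;> omega

lemma suffix_split {α : Type*} {s : List α} (v : List α) {w : List α} (h : s <:+ v ++ w) :
    s <:+ w ∨ ∃ t, t <:+ v ∧ s = t ++ w := by
  induction v with
  | nil => exact Or.inl h
  | cons c v' ih =>
    rw [cons_append, suffix_cons_iff] at h
    rcases h with h | h
    · exact Or.inr ⟨c :: v', suffix_rfl, h⟩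
    · rcases ih h with h' | ⟨t, ht, rfl⟩
      · exact Or.inl h'
      · exact Or.inr ⟨t, ht.trans (suffix_cons c v'), rfl⟩

lemma suffix_count_enc {n : ℕ} (l : List (ℕ × ℕ)) : ∀ x y, Good n x y l → y ≤ x →
    ∀ s, s <:+ enc n x y l → s.count U ≤ s.count D := by
  induction l with
  | nil =>
    intro x y _ hyx s hs
    rcases suffix_split _ hs with h | ⟨t, ht, rfl⟩
    · calc s.count U ≤ (replicate (n - y) D).count U := h.sublist.count_le U
        _ = 0 := by simp [count_replicate]
        _ ≤ s.count D := Nat.zero_le _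
    · have hct : t.count U ≤ n - x := by
        calc t.count U ≤ t.length := count_le_length
          _ ≤ (replicate (n - x) U).length := ht.length_le
          _ = n - x := by simp
      simp only [count_append, count_replicate]
      simp only [show (D == U) = false by decide, show (U == D) = false by decide]
      simp
      omega
  | cons p r ih =>
    obtain ⟨a, b⟩ := p
    intro x y h hyx s hs
    obtain ⟨h1, h2, h3, h4, h5⟩ := h
    have hgr : Good n a b r := good_mono h5 (Nat.le_succ a) le_rfl
    have hE := count_enc (n := n) r a b hgr
    rw [enc] at hs
    rcases suffix_split _ hs with hs' | ⟨t, ht, rfl⟩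
    · rcases suffix_split _ hs' with hs'' | ⟨t, ht, rfl⟩
      · exact ih a b hgr h3 s hs''
      · have hIH := ih a b hgr h3 _ suffix_rfl
        have h1 : t.count U ≤ (replicate (b - y) D).count U := ht.sublist.count_le U
        simp only [count_replicate] at h1
        simp only [count_append]
        simp at h1
        omega
    · have hct : t.count U ≤ a - x := by
        calc t.count U ≤ t.length := count_le_length
          _ ≤ (replicate (a - x) U).length := ht.length_le
          _ = a - x := by simp
      simp only [count_append, count_replicate, hE.1, hE.2]
      simp only [show (D == U) = false by decide, show (U == D) = false by decide]
      simp
      omega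

lemma enc_head {n x y : ℕ} {l : List (ℕ × ℕ)} (h : Good n (x + 1) y l) (hx : x < n) :
    (enc n x y l).head? = some U := by
  cases l with
  | nil =>
    have : n - x = (n - x - 1) + 1 := by omega
    rw [enc, this, replicate_succ]
    rfl
  | cons p r =>
    obtain ⟨a, b⟩ := p
    obtain ⟨h1, -⟩ := h
    have : a - x = (a - x - 1) + 1 := by omega
    rw [enc, this, replicate_succ]
    rfl

lemma dec_replicate_U (k : ℕ) : ∀ (w : List DyckStep) (x y : ℕ),
    dec (replicate k U ++ w) x y = dec w (x + k) y := by
  induction k with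
  | zero => intro w x y; simp [dec]
  | succ k ih =>
    intro w x y
    rw [replicate_succ, cons_append, dec, ih]
    congr 1
    omega

lemma head_replicate_D_nonU {k : ℕ} {w : List DyckStep} (h : w.head? ≠ some U) :
    (replicate k D ++ w).head? ≠ some U := by
  cases k with
  | zero => simpa using h
  | succ k => rw [replicate_succ]; simp

lemma dec_replicate_D_nonU {w : List DyckStep} (hw : w.head? ≠ some U) (k : ℕ) :
    ∀ x y, dec (replicate k D ++ w) x y = dec w x (y + k) := by
  induction k with
  | zero => intro x y; simp [dec]
  | succ k ih =>
    intro x y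
    rw [replicate_succ, cons_append, dec, if_neg (head_replicate_D_nonU hw), nil_append, ih]
    congr 1
    omega

lemma dec_replicate_D_U {w : List DyckStep} (hw : w.head? = some U) (k : ℕ) (hk : 1 ≤ k) :
    ∀ x y, dec (replicate k D ++ w) x y = (x, y + k) :: dec w x (y + k) := by
  induction k with
  | zero => omega
  | succ k ih =>
    intro x y
    cases k with
    | zero => rw [replicate_succ]; simp [dec, hw]
    | succ m =>
      have hh : (replicate (m + 1) D ++ w).head? = some D := by
        rw [replicate_succ]; rfl
      rw [replicate_succ, cons_append, dec, if_neg (by rw [hh]; simp), nil_append,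
        ih (by omega)]
      have : y + 1 + (m + 1) = y + (m + 1 + 1) := by omega
      rw [this]

theorem dec_enc {n : ℕ} (l : List (ℕ × ℕ)) : ∀ x y, Good n x y l → x ≤ n →
    dec (enc n x y l) x y = l := by
  induction l with
  | nil =>
    intro x y _ hx
    rw [enc, dec_replicate_U]
    have h1 : x + (n - x) = n := by omega
    rw [h1, ← append_nil (replicate (n - y) D),
      dec_replicate_D_nonU (by simp) (n - y)]
    rfl
  | cons p r ih =>
    obtain ⟨a, b⟩ := p
    intro x y h hx
    obtain ⟨h1, h2, h3, h4, h5⟩ := h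
    rw [enc, dec_replicate_U]
    have hxa : x + (a - x) = a := by omega
    rw [hxa, dec_replicate_D_U (enc_head h5 h4) (b - y) (by omega)]
    have hyb : y + (b - y) = b := by omega
    rw [hyb, ih a b (good_mono h5 (Nat.le_succ a) le_rfl) (by omega)]

lemma dec_corner_bounds (w : List DyckStep) : ∀ x y a b r,
    dec w x y = (a, b) :: r → x ≤ a ∧ y < b := by
  induction w with
  | nil => intro x y a b r h; simp [dec] at h
  | cons s w ih =>
    intro x y a b r h
    cases s with
    | U =>
      rw [dec] at h
      obtain ⟨h1, h2⟩ := ih _ _ _ _ _ h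
      exact ⟨by omega, h2⟩
    | D =>
      rw [dec] at h
      by_cases hu : w.head? = some U
      · rw [if_pos hu] at h
        simp only [cons_append, nil_append, cons.injEq] at h
        obtain ⟨h1, -⟩ := h
        obtain ⟨rfl, rfl⟩ := Prod.mk.injEq .. ▸ h1
        omega
      · rw [if_neg hu, nil_append] at h
        obtain ⟨h1, h2⟩ := ih _ _ _ _ _ h
        exact ⟨h1, by omega⟩

lemma dec_first_nonU (w : List DyckStep) : ∀ x y a b r, w.head? ≠ some U →
    dec w x y = (a, b) :: r → a = x := by
  induction w with
  | nil => intro x y a b r _ h; simp [dec] at h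
  | cons s w ih =>
    intro x y a b r hne h
    cases s with
    | U => simp at hne
    | D =>
      rw [dec] at h
      by_cases hu : w.head? = some U
      · rw [if_pos hu] at h
        simp only [cons_append, nil_append, cons.injEq] at h
        obtain ⟨h1, -⟩ := h
        exact (Prod.mk.injEq .. ▸ h1).1.symm ▸ rfl
      · rw [if_neg hu, nil_append] at h
        exact ih _ _ _ _ _ hu h

lemma dec_nil_nonU (w : List DyckStep) : ∀ x y, w.head? ≠ some U →
    dec w x y = [] → w.count U = 0 := by
  induction w with
  | nil => intro _ _ _ _; rfl
  | cons s w ih =>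
    intro x y hne h
    cases s with
    | U => simp at hne
    | D =>
      rw [dec, append_eq_nil_iff] at h
      obtain ⟨h1, h2⟩ := h
      have hu : w.head? ≠ some U := by
        intro hc; rw [if_pos hc] at h1; simp at h1
      rw [count_cons]
      simpa using ih _ _ hu h2

theorem enc_dec {n : ℕ} (w : List DyckStep) : ∀ x y, n = x + w.count U →
    n = y + w.count D → enc n x y (dec w x y) = w := by
  induction w with
  | nil =>
    intro x y hU hD
    simp only [count_nil] at hU hD
    rw [dec, enc]
    simp [show n - x = 0 by omega, show n - y = 0 by omega]
  | cons s w ih =>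
    intro x y hU hD
    rw [count_cons] at hU hD
    cases s with
    | U =>
      simp at hU hD
      rw [dec]
      have hU' : n = (x + 1) + w.count U := by omega
      have hD' : n = y + w.count D := by omega
      have key : enc n x y (dec w (x + 1) y) = U :: enc n (x + 1) y (dec w (x + 1) y) := by
        cases hdec : dec w (x + 1) y with
        | nil =>
          rw [enc, enc]
          have h1 : n - x = (n - (x + 1)) + 1 := by omega
          rw [h1, replicate_succ, cons_append]
        | cons p r =>
          obtain ⟨a, b⟩ := p
          obtain ⟨ha, -⟩ := dec_corner_bounds _ _ _ _ _ _ hdec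
          rw [enc, enc]
          have h1 : a - x = (a - (x + 1)) + 1 := by omega
          rw [h1, replicate_succ, cons_append]
      rw [key, ih _ _ hU' hD']
    | D =>
      simp at hU hD
      rw [dec]
      have hU' : n = x + w.count U := by omega
      have hD' : n = (y + 1) + w.count D := by omega
      by_cases hu : w.head? = some U
      · rw [if_pos hu, cons_append, nil_append, enc]
        simp only [Nat.sub_self, replicate_zero, nil_append, Nat.add_sub_cancel_left,
          replicate_one, cons_append, nil_append]
        rw [ih _ _ hU' hD']
      · rw [if_neg hu, nil_append]
        have key : enc n x y (dec w x (y + 1)) = D :: enc n x (y + 1) (dec w x (y + 1)) := by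
          cases hdec : dec w x (y + 1) with
          | nil =>
            have h0 : w.count U = 0 := dec_nil_nonU _ _ _ hu hdec
            rw [enc, enc]
            have h1 : n - x = 0 := by omega
            have h2 : n - y = (n - (y + 1)) + 1 := by omega
            rw [h1, h2, replicate_succ]
            simp
          | cons p r =>
            obtain ⟨a, b⟩ := p
            have ha : a = x := dec_first_nonU _ _ _ _ _ _ hu hdec
            obtain ⟨-, hb⟩ := dec_corner_bounds _ _ _ _ _ _ hdec
            rw [enc, enc, ha]
            have h1 : b - y = (b - (y + 1)) + 1 := by omega
            rw [h1, replicate_succ]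
            simp
        rw [key, ih _ _ hU' hD']

theorem good_dec {n : ℕ} : ∀ (N : ℕ) (w : List DyckStep) (x y : ℕ), w.length ≤ N →
    n = x + w.count U → n = y + w.count D →
    (∀ s, s <:+ w → s.count U ≤ s.count D) → Good n x y (dec w x y) := by
  intro N
  induction N with
  | zero =>
    intro w x y hlen _ _ _
    rw [length_eq_zero_iff.mp (Nat.le_zero.mp hlen)]
    trivial
  | succ N ihN =>
    intro w x y hlen hU hD hsuf
    cases w with
    | nil => trivial
    | cons s w' =>
      rw [length_cons] at hlen
      rw [count_cons] at hU hD
      cases s with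
      | U =>
        simp at hU hD
        rw [dec]
        exact good_mono
          (ihN w' (x + 1) y (by omega) (by omega) (by omega)
            (fun s hs => hsuf s (hs.trans (suffix_cons U w'))))
          (Nat.le_succ x) le_rfl
      | D =>
        simp at hU hD
        by_cases hu : w'.head? = some U
        · cases w' with
          | nil => simp at hu
          | cons s' t =>
            have hs' : s' = U := by
              simpa using hu
            subst hs'
            rw [dec, if_pos hu, cons_append, nil_append, dec]
            rw [count_cons] at hU hD
            simp at hU hD
            have hw'suf : (U :: t).count U ≤ (U :: t).count D :=
              hsuf _ (suffix_cons D (U :: t))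
            rw [count_cons, count_cons] at hw'suf
            simp at hw'suf
            refine ⟨le_rfl, Nat.lt_succ_self y, by omega, by omega, ?_⟩
            rw [length_cons] at hlen
            exact ihN t (x + 1) (y + 1) (by omega) (by omega) (by omega)
              (fun s hs => hsuf s ((hs.trans (suffix_cons U t)).trans (suffix_cons D (U :: t))))
        · rw [dec, if_neg hu, nil_append]
          exact good_mono
            (ihN w' x (y + 1) (by omega) (by omega) (by omega)
              (fun s hs => hsuf s (hs.trans (suffix_cons D w'))))
            le_rfl (Nat.le_succ y)

lemma good_forall {n : ℕ} (l : List (ℕ × ℕ)) : ∀ x y, Good n x y l →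
    ∀ p ∈ l, x ≤ p.1 ∧ y < p.2 ∧ p.2 ≤ p.1 ∧ p.1 < n := by
  induction l with
  | nil => intro x y _ p hp; simp at hp
  | cons q r ih =>
    obtain ⟨a, b⟩ := q
    intro x y h p hp
    obtain ⟨h1, h2, h3, h4, h5⟩ := h
    rcases mem_cons.mp hp with rfl | hp'
    · exact ⟨h1, h2, h3, h4⟩
    · obtain ⟨g1, g2, g3, g4⟩ := ih (a + 1) b h5 p hp'
      exact ⟨by omega, by omega, g3, g4⟩

lemma good_pairwise {n : ℕ} (l : List (ℕ × ℕ)) : ∀ x y, Good n x y l →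
    l.Pairwise (fun p q => p.1 < q.1 ∧ p.2 < q.2) := by
  induction l with
  | nil => intro _ _ _; exact Pairwise.nil
  | cons q r ih =>
    obtain ⟨a, b⟩ := q
    intro x y h
    obtain ⟨h1, h2, h3, h4, h5⟩ := h
    refine Pairwise.cons (fun p hp => ?_) (ih (a + 1) b h5)
    obtain ⟨g1, g2, -⟩ := good_forall r (a + 1) b h5 p hp
    exact ⟨by omega, g2⟩

lemma good_of {n : ℕ} (l : List (ℕ × ℕ)) : ∀ x y,
    (∀ p ∈ l, x ≤ p.1 ∧ y < p.2 ∧ p.2 ≤ p.1 ∧ p.1 < n) →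
    l.Pairwise (fun p q => p.1 < q.1 ∧ p.2 < q.2) → Good n x y l := by
  induction l with
  | nil => intro _ _ _ _; trivial
  | cons q r ih =>
    obtain ⟨a, b⟩ := q
    intro x y hall hpw
    obtain ⟨h1, h2, h3, h4⟩ := hall (a, b) List.mem_cons_self
    rw [List.pairwise_cons] at hpw
    refine ⟨h1, h2, h3, h4, ih (a + 1) b (fun p hp => ?_) hpw.2⟩
    obtain ⟨k1, k2⟩ := hpw.1 p hp
    obtain ⟨-, -, g3, g4⟩ := hall p (mem_cons_of_mem _ hp)
    exact ⟨by omega, by omega, g3, g4⟩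

lemma isim_iff {n : ℕ} (l : List (ℕ × ℕ)) :
    (IsIndexingMatrix n l ∧ blobRank l = 0) ↔ (l ≠ [] ∧ Good n 0 0 l) := by
  constructor
  · rintro ⟨⟨hlen, hle, hall, hpw⟩, hbr⟩
    have hpos : ∀ p ∈ l, 0 < p.1 ∧ 0 < p.2 := by
      intro p hp
      have := countP_eq_zero.mp hbr p hp
      simp at this
      omega
    refine ⟨by intro hc; rw [hc] at hlen; simp at hlen, ?_⟩
    refine good_of l 0 0 (fun p hp => ⟨Nat.zero_le _, (hpos p hp).2, (hall p hp).2,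
      (hall p hp).1⟩) ?_
    refine hpw.imp_of_mem (fun {p q} hp hq hr => ⟨hr.1, lt_of_le_of_ne hr.2.1 ?_⟩)
    intro he
    have h0 := hr.2.2 he
    have h0' := (hpos p hp).2
    omega
  · rintro ⟨hne, hg⟩
    have hall := good_forall l 0 0 hg
    have hpw := good_pairwise l 0 0 hg
    have hnd : (l.map Prod.fst).Nodup :=
      pairwise_map.mpr (hpw.imp fun h => Nat.ne_of_lt h.1)
    have hlenle : l.length ≤ n := by
      have hsub : (l.map Prod.fst).toFinset ⊆ Finset.range n := by
        intro a ha
        rw [List.mem_toFinset, List.mem_map] at ha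
        obtain ⟨p, hp, rfl⟩ := ha
        exact Finset.mem_range.mpr (hall p hp).2.2.2
      calc l.length = (l.map Prod.fst).length := (length_map _).symm
        _ = (l.map Prod.fst).toFinset.card := (toFinset_card_of_nodup hnd).symm
        _ ≤ (Finset.range n).card := Finset.card_le_card hsub
        _ = n := Finset.card_range n
    constructor
    · refine ⟨length_pos_iff.mpr hne, hlenle, fun p hp => ⟨(hall p hp).2.2.2, (hall p hp).2.2.1⟩, ?_⟩
      refine hpw.imp fun h => ⟨h.1, le_of_lt h.2, fun he => absurd he (Nat.ne_of_lt h.2)⟩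
    · refine countP_eq_zero.mpr fun p hp => ?_
      have := hall p hp
      simp
      omega

/-- The Dyck word encoded by a good corner list. -/
def toDW (n : ℕ) (l : List (ℕ × ℕ)) (h : Good n 0 0 l) : DyckWord where
  toList := enc n 0 0 l
  count_U_eq_count_D := by rw [(count_enc l 0 0 h).1, (count_enc l 0 0 h).2]
  count_D_le_count_U := by
    intro i
    have hs := suffix_count_enc l 0 0 h le_rfl
    set w := enc n 0 0 l with hw
    have h1 : w.take i ++ w.drop i = w := take_append_drop i w
    have h2 := hs (w.drop i) (drop_suffix i w)
    have h3 : (w.take i).count U + (w.drop i).count U = w.count U := by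
      rw [← count_append, h1]
    have h4 : (w.take i).count D + (w.drop i).count D = w.count D := by
      rw [← count_append, h1]
    have h5 : w.count U = w.count D := by
      rw [hw, (count_enc l 0 0 h).1, (count_enc l 0 0 h).2]
    omega

/-- The promised equivalence with Dyck words of semilength `n`. -/
noncomputable def theEquiv (n : ℕ) :
    {l : List (ℕ × ℕ) // Good n 0 0 l} ≃ {p : DyckWord // p.semilength = n} where
  toFun := fun ⟨l, h⟩ => ⟨toDW n l h, by
    show (enc n 0 0 l).count U = n
    rw [(count_enc l 0 0 h).1]; omega⟩
  invFun := fun ⟨p, hp⟩ => ⟨dec p.toList 0 0, by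
    have hU : p.toList.count U = n := hp
    have hD : p.toList.count D = n := by rw [← p.count_U_eq_count_D, hU]
    refine good_dec p.toList.length p.toList 0 0 le_rfl (by omega) (by omega) ?_
    intro s hs
    obtain ⟨t, ht⟩ := hs
    have hpre := p.count_D_le_count_U t.length
    rw [← ht, take_left] at hpre
    have h3 : t.count U + s.count U = p.toList.count U := by rw [← count_append, ht]
    have h4 : t.count D + s.count D = p.toList.count D := by rw [← count_append, ht]
    omega⟩
  left_inv := fun ⟨l, h⟩ => Subtype.ext (dec_enc l 0 0 h (Nat.zero_le n))
  right_inv := fun ⟨p, hp⟩ => by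
    refine Subtype.ext (DyckWord.ext ?_)
    show enc n 0 0 (dec p.toList 0 0) = p.toList
    have hU : p.toList.count U = n := hp
    have hD : p.toList.count D = n := by rw [← p.count_U_eq_count_D, hU]
    exact enc_dec p.toList 0 0 (by omega) (by omega)

end Stmt6Aux

/-- `Ω_0^{(n)} = C_n` for all `n ≥ 1`. -/
theorem stmt6 (n : ℕ) (hn : 1 ≤ n) : Omega n 0 = catalan n := by
  classical
  set S := {l : List (ℕ × ℕ) // IsIndexingMatrix n l ∧ blobRank l = 0} with hS
  have e1 := Stmt6Aux.theEquiv n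
  have e2 : {l : List (ℕ × ℕ) // Stmt6Aux.Good n 0 0 l} ≃ Option S :=
    { toFun := fun x => if hl : x.1 = [] then none else
        some ⟨x.1, (Stmt6Aux.isim_iff x.1).2 ⟨hl, x.2⟩⟩
      invFun := fun o => o.elim ⟨[], trivial⟩ (fun y => ⟨y.1, ((Stmt6Aux.isim_iff y.1).1 y.2).2⟩)
      left_inv := fun x => by
        by_cases hl : x.1 = []
        · simp only [hl, dif_pos]
          exact Subtype.ext hl.symm
        · simp only [hl, dif_neg, not_false_iff, Option.elim]
      right_inv := fun o => by
        cases o with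
        | none => simp
        | some y =>
          have hne := ((Stmt6Aux.isim_iff y.1).1 y.2).1
          simp only [Option.elim, hne, dif_neg, not_false_iff]
          exact dif_neg hne }
  haveI : Finite {l : List (ℕ × ℕ) // Stmt6Aux.Good n 0 0 l} := Finite.of_equiv _ e1.symm
  haveI : Finite (Option S) := Finite.of_equiv _ e2
  haveI : Finite S := Finite.of_injective Option.some (Option.some_injective S)
  have h1 : Omega n 0 = Nat.card S + 1 := by
    rw [Omega]
    simp
    rfl
  rw [h1, ← Finite.card_option, ← Nat.card_congr e2, Nat.card_congr e1,
    Nat.card_eq_fintype_card, DyckWord.card_dyckWord_semilength_eq_catalan]
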